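/- (Proposition 1: deterministic proximal-gradient variational inference with fixed step size β = α/L.) Let f : E → ℝ be differentiable with L-Lipschitz gradient (L > 0), let h : E → ℝ be convex on S, let α > 0, let t ≥ 1, and let λ : ℕ → E satisfy: λ₀ ∈ S, and for every k < t, λ_{k+1} ∈ S minimizes λ ↦ ⟨λ, ∇f(λ_k)⟩ + h(λ) + (L/α)·D(λ, λ_k) over S, h is differentiable at λ_{k+1}, the map λ ↦ D(λ, λ_k) is differentiable at λ_{k+1}, and ⟨λ_{k+1} − λ_k, ∇₁D(λ_{k+1}, λ_k)⟩ ≥ α·‖λ_{k+1} − λ_k‖². Suppose 𝓛* ∈ ℝ satisfies −(f(λ) + h(λ)) ≤ 𝓛* for all λ ∈ S, and set C₀ := 𝓛* + f(λ₀) + h(λ₀) and G_k := (L/α)·(λ_k − λ_{k+1}). Then min over k ∈ {0, 1, …, t−1} of ‖G_k‖² is at most 2·L·C₀ / (α²·t). -/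

import Mathlib

open scoped RealInnerProductSpace

lemma line_hasDerivAt {E : Type*} [NormedAddCommGroup E] [InnerProductSpace ℝ E] [CompleteSpace E]
    (g : E → ℝ) (x v : E) (s : ℝ) (hg : DifferentiableAt ℝ g (x + s • v)) :
    HasDerivAt (fun s : ℝ => g (x + s • v)) ⟪gradient g (x + s • v), v⟫ s := by
  have h1 : HasDerivAt (fun s : ℝ => x + s • v) v s := by
    simpa using ((hasDerivAt_id s).smul_const v).const_add x
  have h2 := hasGradientAt_iff_hasFDerivAt.mp hg.hasGradientAt
  have := h2.comp_hasDerivAt s h1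
  simpa [InnerProductSpace.toDual_apply_apply, Function.comp_def] using this

lemma descent_lemma {E : Type*} [NormedAddCommGroup E] [InnerProductSpace ℝ E] [CompleteSpace E]
    (f : E → ℝ) (L : ℝ) (hL : 0 < L) (hf : Differentiable ℝ f)
    (hlip : ∀ x y : E, ‖gradient f x - gradient f y‖ ≤ L * ‖x - y‖) (x y : E) :
    f y ≤ f x + ⟪gradient f x, y - x⟫ + L / 2 * ‖y - x‖ ^ 2 := by
  set v := y - x with hv
  set φ : ℝ → ℝ := fun s => L * ‖v‖ ^ 2 * s ^ 2 / 2 + s * ⟪gradient f x, v⟫ - f (x + s • v)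
    with hφ
  have hder : ∀ s : ℝ, HasDerivAt φ
      (L * ‖v‖ ^ 2 * s + ⟪gradient f x, v⟫ - ⟪gradient f (x + s • v), v⟫) s := by
    intro s
    have h1 := line_hasDerivAt f x v s (hf _)
    have h2 : HasDerivAt (fun s : ℝ => L * ‖v‖ ^ 2 * s ^ 2 / 2 + s * ⟪gradient f x, v⟫)
        (L * ‖v‖ ^ 2 * s + ⟪gradient f x, v⟫) s := by
      have ha : HasDerivAt (fun s : ℝ => L * ‖v‖ ^ 2 * s ^ 2 / 2) (L * ‖v‖ ^ 2 * s) s := by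
        have := ((hasDerivAt_pow 2 s).const_mul (L * ‖v‖ ^ 2)).div_const 2
        exact this.congr_deriv (by ring)
      have hb : HasDerivAt (fun s : ℝ => s * ⟪gradient f x, v⟫) ⟪gradient f x, v⟫ s := by
        simpa using (hasDerivAt_id s).mul_const (⟪gradient f x, v⟫ : ℝ)
      exact ha.add hb
    exact h2.sub h1
  have hd0 : ∀ s ∈ Set.Icc (0:ℝ) 1, 0 ≤ deriv φ s := by
    intro s hs
    rw [(hder s).deriv]
    have h1 : ⟪gradient f (x + s • v), v⟫ - ⟪gradient f x, v⟫ ≤ L * ‖v‖ ^ 2 * s := by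
      rw [← inner_sub_left]
      calc ⟪gradient f (x + s • v) - gradient f x, v⟫
          ≤ ‖gradient f (x + s • v) - gradient f x‖ * ‖v‖ := real_inner_le_norm _ _
        _ ≤ L * ‖x + s • v - x‖ * ‖v‖ := by
            gcongr
            exact hlip _ _
        _ = L * ‖v‖ ^ 2 * s := by
            simp [norm_smul, abs_of_nonneg hs.1]; ring
    linarith
  have hmono : MonotoneOn φ (Set.Icc (0:ℝ) 1) := by
    apply monotoneOn_of_deriv_nonneg (convex_Icc 0 1)
    · exact Continuous.continuousOn (by
        simp only [hφ]; have := hf.continuous; fun_prop)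
    · intro s hs
      exact ((hder s).differentiableAt).differentiableWithinAt
    · intro s hs
      exact hd0 s (interior_subset hs)
  have h01 := hmono (Set.mem_Icc.mpr ⟨le_refl 0, zero_le_one⟩)
    (Set.mem_Icc.mpr ⟨zero_le_one, le_refl 1⟩) zero_le_one
  simp only [hφ] at h01
  have e0 : x + (0:ℝ) • v = x := by simp
  have e1 : x + (1:ℝ) • v = y := by simp [hv]
  rw [e0, e1] at h01
  simp at h01
  have : (fderiv ℝ f x) v = ⟪gradient f x, v⟫ := by simp
  linarith

section aux
variable {E : Type*} [NormedAddCommGroup E] [InnerProductSpace ℝ E] [CompleteSpace E]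

lemma key_step (S : Set E) (hS : Convex ℝ S) (h : E → ℝ) (Da : E → ℝ)
    (f : E → ℝ) (L : ℝ) (hL : 0 < L) (hf : Differentiable ℝ f)
    (hlip : ∀ x y : E, ‖gradient f x - gradient f y‖ ≤ L * ‖x - y‖)
    (hconv : ConvexOn ℝ S h) (α : ℝ) (hα : 0 < α)
    (a b : E) (haS : a ∈ S) (hbS : b ∈ S)
    (hmin : ∀ y ∈ S, ⟪b, gradient f a⟫ + h b + (L / α) * Da b ≤
        ⟪y, gradient f a⟫ + h y + (L / α) * Da y)
    (hDdiff : DifferentiableAt ℝ Da b)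
    (hA6 : ⟪b - a, gradient Da b⟫ ≥ α * ‖b - a‖ ^ 2) :
    L / 2 * ‖b - a‖ ^ 2 ≤ (f a + h a) - (f b + h b) := by
  set g := gradient f a with hg
  set v := a - b with hv
  set w := gradient Da b with hw
  set φ : ℝ → ℝ := fun s => (L / α) * Da (b + s • v) + s * (⟪v, g⟫ + h a - h b) with hφ
  -- minimality along the segment
  have hφmin : ∀ s ∈ Set.Ioc (0:ℝ) 1, φ 0 ≤ φ s := by
    intro s hs
    obtain ⟨hs0, hs1⟩ := hs
    have hy : b + s • v = (1 - s) • b + s • a := by rw [hv]; module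
    have hyS : b + s • v ∈ S := by
      rw [hy]
      exact hS hbS haS (by linarith) (le_of_lt hs0) (by ring)
    have hhy : h (b + s • v) ≤ (1 - s) * h b + s * h a := by
      rw [hy]
      exact hconv.2 hbS haS (by linarith) (le_of_lt hs0) (by ring)
    have hm := hmin _ hyS
    have hinner : ⟪b + s • v, g⟫ = ⟪b, g⟫ + s * ⟪v, g⟫ := by
      rw [inner_add_left, real_inner_smul_left]
    simp only [hφ]
    have := hm.trans (by linarith [hinner] : ⟪b + s • v, g⟫ + h (b + s • v) +
      (L / α) * Da (b + s • v) ≤ ⟪b, g⟫ + s * ⟪v, g⟫ + ((1 - s) * h b + s * h a) +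
      (L / α) * Da (b + s • v))
    simp only [zero_smul, add_zero, zero_mul]
    nlinarith [this]
  -- derivative of φ at 0
  have hder : HasDerivAt φ ((L / α) * ⟪w, v⟫ + (⟪v, g⟫ + h a - h b)) 0 := by
    have h1 : HasDerivAt (fun s : ℝ => Da (b + s • v)) ⟪w, v⟫ 0 := by
      have := line_hasDerivAt Da b v 0 (by simpa using hDdiff)
      simpa [hw] using this
    have h2 : HasDerivAt (fun s : ℝ => s * (⟪v, g⟫ + h a - h b)) (⟪v, g⟫ + h a - h b) 0 := by
      simpa using (hasDerivAt_id (0:ℝ)).mul_const (⟪v, g⟫ + h a - h b)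
    exact (h1.const_mul (L / α)).add h2
  -- nonnegativity of the one-sided derivative
  have hd0 : 0 ≤ (L / α) * ⟪w, v⟫ + (⟪v, g⟫ + h a - h b) := by
    have htend := hasDerivAt_iff_tendsto_slope.mp hder
    have htend' : Filter.Tendsto (slope φ 0) (nhdsWithin 0 (Set.Ioi 0))
        (nhds ((L / α) * ⟪w, v⟫ + (⟪v, g⟫ + h a - h b))) :=
      htend.mono_left (nhdsWithin_mono _ (fun x hx => Set.mem_compl_singleton_iff.mpr
        (ne_of_gt hx)))
    refine ge_of_tendsto htend' ?_
    filter_upwards [Ioc_mem_nhdsGT_of_mem (Set.mem_Ico.mpr ⟨le_refl 0, zero_lt_one⟩)] with s hs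
    have := hφmin s hs
    have hs0 : (0:ℝ) < s := hs.1
    rw [slope_def_field]
    simp only [sub_zero]
    exact div_nonneg (by linarith) (le_of_lt hs0)
  -- combine with A6
  have hwv : ⟪w, v⟫ ≤ -(α * ‖b - a‖ ^ 2) := by
    have : ⟪w, v⟫ = -⟪b - a, w⟫ := by
      rw [hv, real_inner_comm, ← inner_neg_left]
      congr 1; abel
    rw [this]
    linarith [hA6]
  have hLα : 0 ≤ L / α := le_of_lt (div_pos hL hα)
  have hkey : h b - h a - ⟪v, g⟫ ≤ -(L * ‖b - a‖ ^ 2) := by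
    have h1 : (L / α) * ⟪w, v⟫ ≤ (L / α) * (-(α * ‖b - a‖ ^ 2)) :=
      mul_le_mul_of_nonneg_left hwv hLα
    have h2 : (L / α) * (-(α * ‖b - a‖ ^ 2)) = -(L * ‖b - a‖ ^ 2) := by
      field_simp
    linarith
  -- descent lemma
  have hdesc := descent_lemma f L hL hf hlip a b
  have hvg : ⟪v, g⟫ = -⟪g, b - a⟫ := by
    rw [hv, real_inner_comm, show a - b = -(b - a) from by abel, inner_neg_right]
  rw [hvg] at hkey
  linarith [hdesc]

end aux

/-- Proposition 1: deterministic proximal-gradient variational inference with the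
fixed step size `β = α/L`:
`min_{k < t} ‖G_k‖² ≤ 2LC₀/(α²t)`, where `G_k := (L/α)·(λ_k − λ_{k+1})` and
`C₀ := 𝓛* + f(λ₀) + h(λ₀)`. -/
theorem stmt_3 {E : Type*} [NormedAddCommGroup E] [InnerProductSpace ℝ E] [CompleteSpace E]
    (S : Set E) (hS : Convex ℝ S)
    (h : E → ℝ) (D : E → E → ℝ)
    (f : E → ℝ) (L : ℝ) (hL : 0 < L)
    (hf : Differentiable ℝ f)
    (hlip : ∀ x y : E, ‖gradient f x - gradient f y‖ ≤ L * ‖x - y‖)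
    (hconv : ConvexOn ℝ S h)
    (α : ℝ) (hα : 0 < α) (t : ℕ) (ht : 1 ≤ t)
    (lam : ℕ → E)
    (hlam0 : lam 0 ∈ S)
    (hmem : ∀ k < t, lam (k + 1) ∈ S)
    (hmin : ∀ k < t, ∀ y ∈ S,
      ⟪lam (k + 1), gradient f (lam k)⟫ + h (lam (k + 1)) +
          (L / α) * D (lam (k + 1)) (lam k) ≤
        ⟪y, gradient f (lam k)⟫ + h y + (L / α) * D y (lam k))
    (hdiff : ∀ k < t, DifferentiableAt ℝ h (lam (k + 1)))
    (hDdiff : ∀ k < t, DifferentiableAt ℝ (fun x => D x (lam k)) (lam (k + 1)))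
    (hA6 : ∀ k < t,
      ⟪lam (k + 1) - lam k, gradient (fun x => D x (lam k)) (lam (k + 1))⟫ ≥
        α * ‖lam (k + 1) - lam k‖ ^ 2)
    (Lstar : ℝ) (hLstar : ∀ x ∈ S, -(f x + h x) ≤ Lstar) :
    (Finset.range t).inf' (Finset.nonempty_range_iff.mpr (by omega))
        (fun k => ‖(L / α) • (lam k - lam (k + 1))‖ ^ 2) ≤
      2 * L * (Lstar + f (lam 0) + h (lam 0)) / (α ^ 2 * t) := by
  -- all iterates stay in S
  have hmemS : ∀ k ≤ t, lam k ∈ S := by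
    intro k
    induction k with
    | zero => exact fun _ => hlam0
    | succ n _ => exact fun hk => hmem n (by omega)
  set F : ℕ → ℝ := fun k => f (lam k) + h (lam k) with hF
  -- per-step descent
  have key : ∀ k < t, L / 2 * ‖lam (k + 1) - lam k‖ ^ 2 ≤ F k - F (k + 1) := by
    intro k hk
    exact key_step S hS h (fun x => D x (lam k)) f L hL hf hlip hconv α hα
      (lam k) (lam (k + 1)) (hmemS k (by omega)) (hmem k hk)
      (hmin k hk) (hDdiff k hk) (hA6 k hk)
  -- summation / telescoping
  have hsum : ∑ k ∈ Finset.range t, L / 2 * ‖lam (k + 1) - lam k‖ ^ 2 ≤ F 0 - F t :=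
    (Finset.sum_le_sum fun k hk => key k (Finset.mem_range.mp hk)).trans_eq
      (Finset.sum_range_sub' F t)
  have hFt : -Lstar ≤ F t := by
    have := hLstar (lam t) (hmemS t le_rfl)
    simp only [hF]; linarith
  have hC : ∑ k ∈ Finset.range t, L / 2 * ‖lam (k + 1) - lam k‖ ^ 2 ≤
      Lstar + f (lam 0) + h (lam 0) := by
    simp only [hF] at hsum hFt
    linarith
  set C₀ := Lstar + f (lam 0) + h (lam 0) with hC₀
  set m := (Finset.range t).inf' (Finset.nonempty_range_iff.mpr (by omega : t ≠ 0))
      (fun k => ‖(L / α) • (lam k - lam (k + 1))‖ ^ 2) with hm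
  have hGk : ∀ k, ‖(L / α) • (lam k - lam (k + 1))‖ ^ 2 =
      (L / α) ^ 2 * ‖lam (k + 1) - lam k‖ ^ 2 := by
    intro k
    rw [norm_smul, norm_sub_rev, Real.norm_eq_abs, abs_of_pos (div_pos hL hα), mul_pow]
  have htm : (t : ℝ) * m ≤ (L / α) ^ 2 * ∑ k ∈ Finset.range t, ‖lam (k + 1) - lam k‖ ^ 2 := by
    calc (t : ℝ) * m = ∑ _k ∈ Finset.range t, m := by
          rw [Finset.sum_const, Finset.card_range, nsmul_eq_mul]
      _ ≤ ∑ k ∈ Finset.range t, ‖(L / α) • (lam k - lam (k + 1))‖ ^ 2 :=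
          Finset.sum_le_sum fun k hk => Finset.inf'_le _ hk
      _ = (L / α) ^ 2 * ∑ k ∈ Finset.range t, ‖lam (k + 1) - lam k‖ ^ 2 := by
          rw [Finset.mul_sum]
          exact Finset.sum_congr rfl fun k _ => hGk k
  have hsum2 : ∑ k ∈ Finset.range t, ‖lam (k + 1) - lam k‖ ^ 2 ≤ 2 / L * C₀ := by
    have : L / 2 * ∑ k ∈ Finset.range t, ‖lam (k + 1) - lam k‖ ^ 2 ≤ C₀ := by
      rw [Finset.mul_sum]; exact hC
    rw [div_mul_eq_mul_div, le_div_iff₀ hL] at *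
    nlinarith
  have ht0 : (0 : ℝ) < t := by exact_mod_cast ht
  have hα2t : (0 : ℝ) < α ^ 2 * t := by positivity
  rw [le_div_iff₀ hα2t]
  have h1 : (t : ℝ) * m ≤ (L / α) ^ 2 * (2 / L * C₀) := by
    calc (t : ℝ) * m ≤ (L / α) ^ 2 * ∑ k ∈ Finset.range t, ‖lam (k + 1) - lam k‖ ^ 2 := htm
      _ ≤ (L / α) ^ 2 * (2 / L * C₀) := by
          apply mul_le_mul_of_nonneg_left hsum2 (by positivity)
  have h2 : (L / α) ^ 2 * (2 / L * C₀) = 2 * L * C₀ / α ^ 2 := by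
    field_simp
  rw [h2] at h1
  have hα2 : (0 : ℝ) < α ^ 2 := by positivity
  rw [div_eq_mul_inv] at h1
  have h3 := mul_le_mul_of_nonneg_right h1 (le_of_lt hα2)
  rw [mul_assoc (2 * L * C₀), inv_mul_cancel₀ (ne_of_gt hα2), mul_one] at h3
  nlinarith [h3]
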